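/- Let n ≥ 2 be an integer and let p₁ be its smallest prime factor. Every subset E of the n-th roots of unity with #E < p₁ is independent over ℤ as a subset of ℂ. -/

import Mathlib

def Indep (S : Set ℂ) : Prop :=
  ∀ (s : Finset ℂ) (ε : ℂ → ℤ), ↑s ⊆ S →
    (∑ z ∈ s, (ε z : ℂ) * z) = 0 → ∀ z ∈ s, ε z = 0

open Polynomial IntermediateField Module


set_option maxHeartbeats 1000000 in
set_option synthInstance.maxHeartbeats 400000 in
lemma crux {n p : ℕ} (hn : 2 ≤ n) (hpdef : p = n.minFac) {ζ : ℂ} (hζ : IsPrimitiveRoot ζ n)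
    (c : ℕ → ℚ⟮ζ ^ p⟯)
    (hrel : ∑ r ∈ Finset.range p, ((c r : ℂ) * ζ ^ r) = 0)
    (hcount : ((Finset.range p).filter (fun r => c r ≠ 0)).card < p) :
    ∀ r < p, c r = 0 := by
  have hnpos : 0 < n := by omega
  have hp : p.Prime := hpdef ▸ Nat.minFac_prime (by omega)
  have hp2 : 2 ≤ p := hp.two_le
  have hpdvd : p ∣ n := hpdef ▸ Nat.minFac_dvd n
  set m := n / p with hmdef
  have hnm : n = p * m := (Nat.mul_div_cancel' hpdvd).symm
  have hmpos : 0 < m := Nat.div_pos (hpdef ▸ Nat.minFac_le hnpos) hp.pos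
  have hζp : IsPrimitiveRoot (ζ ^ p) m := hζ.pow hnpos hnm
  have hζ0 : ζ ≠ 0 := hζ.ne_zero hnpos.ne'
  have hζint : IsIntegral ℚ ζ := (hζ.isIntegral hnpos).tower_top
  have hζpint : IsIntegral ℚ (ζ ^ p) := (hζp.isIntegral hmpos).tower_top
  have hFint : IsIntegral ℚ⟮ζ ^ p⟯ ζ := hζint.tower_top
  -- the degree of the minimal polynomial of ζ over ℚ(ζ^p)
  have hrank1 : finrank ℚ ℚ⟮ζ ^ p⟯ = m.totient := by
    rw [IntermediateField.adjoin.finrank hζpint, ← cyclotomic_eq_minpoly_rat hζp hmpos,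
      natDegree_cyclotomic]
  have hres : ((ℚ⟮ζ ^ p⟯⟮ζ⟯ : IntermediateField ℚ⟮ζ ^ p⟯ ℂ).restrictScalars ℚ) = ℚ⟮ζ⟯ := by
    erw [IntermediateField.adjoin_simple_adjoin_simple]
    apply le_antisymm
    · rw [IntermediateField.adjoin_le_iff]
      have h1 : ζ ∈ ℚ⟮ζ⟯ := IntermediateField.mem_adjoin_simple_self ℚ ζ
      rintro x hx
      rcases hx with h | h
      · rw [h]; exact pow_mem h1 p
      · rw [Set.mem_singleton_iff] at h; rw [h]; exact h1
    · exact IntermediateField.adjoin.mono _ _ _ (by simp)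
  have hrank2 : finrank ℚ ((ℚ⟮ζ ^ p⟯⟮ζ⟯ : IntermediateField ℚ⟮ζ ^ p⟯ ℂ).restrictScalars ℚ)
      = n.totient := by
    rw [hres, IntermediateField.adjoin.finrank hζint, ← cyclotomic_eq_minpoly_rat hζ hnpos,
      natDegree_cyclotomic]
  have hrank2' : finrank ℚ (ℚ⟮ζ ^ p⟯⟮ζ⟯ : IntermediateField ℚ⟮ζ ^ p⟯ ℂ) = n.totient := hrank2
  have htower : finrank ℚ ℚ⟮ζ ^ p⟯ *
      finrank ℚ⟮ζ ^ p⟯ (ℚ⟮ζ ^ p⟯⟮ζ⟯ : IntermediateField ℚ⟮ζ ^ p⟯ ℂ) = n.totient := by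
    rw [Module.finrank_mul_finrank ℚ ℚ⟮ζ ^ p⟯ (ℚ⟮ζ ^ p⟯⟮ζ⟯ : IntermediateField ℚ⟮ζ ^ p⟯ ℂ)]
    exact hrank2'
  have hMdeg : m.totient * (minpoly ℚ⟮ζ ^ p⟯ ζ).natDegree = n.totient := by
    rw [← hrank1, ← IntermediateField.adjoin.finrank hFint]; exact htower
  have hMd : (minpoly ℚ⟮ζ ^ p⟯ ζ).natDegree = p ∨ (minpoly ℚ⟮ζ ^ p⟯ ζ).natDegree = p - 1 := by
    have htpos : 0 < m.totient := Nat.totient_pos.mpr hmpos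
    by_cases hpm : p ∣ m
    · left
      have h2 : n.totient = p * m.totient := by
        rw [hnm, Nat.totient_mul_of_prime_of_dvd hp hpm]
      exact Nat.eq_of_mul_eq_mul_left htpos ((hMdeg.trans h2).trans (mul_comm p _))
    · right
      have hco : Nat.Coprime p m := (Nat.Prime.coprime_iff_not_dvd hp).mpr hpm
      have h2 : n.totient = (p - 1) * m.totient := by
        rw [hnm, Nat.totient_mul hco, Nat.totient_prime hp]
      exact Nat.eq_of_mul_eq_mul_left htpos ((hMdeg.trans h2).trans (mul_comm _ _))
  -- the polynomial g
  set g : Polynomial ℚ⟮ζ ^ p⟯ := ∑ r ∈ Finset.range p, C (c r) * X ^ r with hgdef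
  have hgcoeff : ∀ r < p, g.coeff r = c r := by
    intro r hr
    rw [hgdef, Polynomial.finset_sum_coeff,
      Finset.sum_eq_single_of_mem r (Finset.mem_range.mpr hr)]
    · simp [Polynomial.coeff_C_mul, Polynomial.coeff_X_pow]
    · intro b _ hbr
      simp [Polynomial.coeff_C_mul, Polynomial.coeff_X_pow, Ne.symm hbr]
  suffices hg0 : g = 0 by
    intro r hr
    have := hgcoeff r hr
    rw [hg0] at this
    simpa using this.symm
  by_contra hgne
  have hgdeg : g.natDegree ≤ p - 1 := by
    rw [hgdef]
    apply Polynomial.natDegree_sum_le_of_forall_le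
    intro r hr
    refine le_trans (Polynomial.natDegree_C_mul_X_pow_le _ _) ?_
    have := Finset.mem_range.mp hr
    omega
  have hgeval : Polynomial.aeval ζ g = 0 := by
    rw [hgdef, map_sum, ← hrel]
    refine Finset.sum_congr rfl fun r _ => ?_
    rw [map_mul, Polynomial.aeval_C, map_pow, Polynomial.aeval_X]
    rfl
  have hMdvd : minpoly ℚ⟮ζ ^ p⟯ ζ ∣ g := minpoly.dvd _ ζ hgeval
  have hMledeg : (minpoly ℚ⟮ζ ^ p⟯ ζ).natDegree ≤ g.natDegree :=
    Polynomial.natDegree_le_of_dvd hMdvd hgne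
  have hMmonic : (minpoly ℚ⟮ζ ^ p⟯ ζ).Monic := minpoly.monic hFint
  have hMne : minpoly ℚ⟮ζ ^ p⟯ ζ ≠ 0 := hMmonic.ne_zero
  rcases hMd with hcase | hcase
  · omega
  -- now the minimal polynomial has degree p - 1 and we show it has full support
  have haF : ζ ^ p ∈ ℚ⟮ζ ^ p⟯ := IntermediateField.mem_adjoin_simple_self ℚ (ζ ^ p)
  set a : ℚ⟮ζ ^ p⟯ := ⟨ζ ^ p, haF⟩ with hadef
  have ha0 : a ≠ 0 := by
    intro h
    apply hζ0
    have : (a : ℂ) = 0 := by rw [h]; rfl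
    rw [hadef] at this
    exact pow_eq_zero_iff hp.pos.ne' |>.mp this
  set P : Polynomial ℚ⟮ζ ^ p⟯ := X ^ p - C a with hPdef
  have hPmonic : P.Monic := Polynomial.monic_X_pow_sub_C a (by omega)
  have hPeval : Polynomial.aeval ζ P = 0 := by
    rw [hPdef, map_sub, map_pow, Polynomial.aeval_X, Polynomial.aeval_C]
    exact sub_eq_zero.mpr rfl
  obtain ⟨Q, hQ⟩ := minpoly.dvd _ ζ hPeval
  have hQmonic : Q.Monic := hMmonic.of_mul_monic_left (hQ ▸ hPmonic)
  have hQne : Q ≠ 0 := hQmonic.ne_zero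
  have hPdeg : P.natDegree = p := by
    rw [hPdef]; exact Polynomial.natDegree_X_pow_sub_C
  have hQdeg : Q.natDegree = 1 := by
    have h := Polynomial.natDegree_mul hMne hQne
    rw [← hQ, hPdeg] at h
    omega
  set b : ℚ⟮ζ ^ p⟯ := -Q.coeff 0 with hbdef
  have hQeq : Q = X - C b := by
    rw [hbdef, map_neg, sub_neg_eq_add]
    exact hQmonic.eq_X_add_C hQdeg
  have hbroot : b ^ p = a := by
    have h1 : Polynomial.eval b P = b ^ p - a := by
      rw [hPdef]; simp
    have h2 : Polynomial.eval b P = 0 := by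
      rw [hQ, Polynomial.eval_mul, hQeq, Polynomial.eval_sub, Polynomial.eval_X,
        Polynomial.eval_C, sub_self, mul_zero]
    rw [h2] at h1
    exact (sub_eq_zero.mp h1.symm)
  have hbne : b ≠ 0 := by
    intro h
    rw [h, zero_pow hp.pos.ne'] at hbroot
    exact ha0 hbroot.symm
  set S : Polynomial ℚ⟮ζ ^ p⟯ := ∑ i ∈ Finset.range p, X ^ i * C (b ^ (p - 1 - i)) with hSdef
  have hgeom : S * (X - C b) = X ^ p - C (b ^ p) := by
    have h := geom_sum₂_mul (X : Polynomial ℚ⟮ζ ^ p⟯) (C b) p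
    simp only [← Polynomial.C_pow] at h
    rw [hSdef]
    exact h
  have hMS : minpoly ℚ⟮ζ ^ p⟯ ζ = S := by
    apply mul_right_cancel₀ (b := Q) hQne
    rw [← hQ, hPdef, hQeq, hgeom, hbroot]
  have hScoeff : ∀ r < p, S.coeff r = b ^ (p - 1 - r) := by
    intro r hr
    rw [hSdef, Polynomial.finset_sum_coeff,
      Finset.sum_eq_single_of_mem r (Finset.mem_range.mpr hr)]
    · rw [Polynomial.coeff_mul_C, Polynomial.coeff_X_pow]; simp
    · intro i _ hir
      rw [Polynomial.coeff_mul_C, Polynomial.coeff_X_pow]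
      simp [Ne.symm hir]
  obtain ⟨q, hq⟩ := hMdvd
  have hqne : q ≠ 0 := fun h => hgne (by rw [hq, h, mul_zero])
  have hqdeg : q.natDegree = 0 := by
    have h := Polynomial.natDegree_mul hMne hqne
    rw [← hq] at h
    omega
  have hqC : q = C (q.coeff 0) := Polynomial.eq_C_of_natDegree_eq_zero hqdeg
  have hq0 : q.coeff 0 ≠ 0 := fun h => hqne (by rw [hqC, h, map_zero])
  have hallne : ∀ r ∈ Finset.range p, c r ≠ 0 := by
    intro r hr
    have hrp := Finset.mem_range.mp hr
    rw [← hgcoeff r hrp, hq, hqC, Polynomial.coeff_mul_C, hMS, hScoeff r hrp]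
    exact mul_ne_zero (pow_ne_zero _ hbne) hq0
  rw [Finset.filter_true_of_mem hallne, Finset.card_range] at hcount
  omega

set_option maxHeartbeats 1000000 in
lemma keyPoly : ∀ n : ℕ, ∀ ζ : ℂ, IsPrimitiveRoot ζ n → ∀ f : Polynomial ℚ,
    (∀ k ∈ f.support, k < n) → Polynomial.aeval ζ f = 0 →
    (n ≤ 1 ∨ f.support.card < n.minFac) → f = 0 := by
  intro n
  induction n using Nat.strong_induction_on with
  | _ n ih =>
  intro ζ hζ f hsupp heval hcard
  have hcases : n = 0 ∨ n = 1 ∨ 2 ≤ n := by omega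
  rcases hcases with rfl | rfl | hn2
  · exact Polynomial.support_eq_empty.mp
      (Finset.eq_empty_of_forall_notMem fun k hk => absurd (hsupp k hk) (by omega))
  · by_contra hf
    have hd : f.natDegree ∈ f.support := Polynomial.natDegree_mem_support_of_nonzero hf
    have hd0 : f.natDegree = 0 := by have := hsupp _ hd; omega
    have hfC : f = Polynomial.C (f.coeff 0) := Polynomial.eq_C_of_natDegree_eq_zero hd0
    rw [hfC, Polynomial.aeval_C] at heval
    have : f.coeff 0 = 0 := (algebraMap ℚ ℂ).injective (by simpa using heval)
    exact hf (by rw [hfC, this, map_zero])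
  -- main case
  obtain ⟨p, hpdef⟩ : ∃ p, p = n.minFac := ⟨_, rfl⟩
  obtain ⟨m, hmdef⟩ : ∃ m, m = n / p := ⟨_, rfl⟩
  have hp : p.Prime := hpdef ▸ Nat.minFac_prime (by omega)
  have hpdvd : p ∣ n := hpdef ▸ Nat.minFac_dvd n
  have hnm : n = p * m := by rw [hmdef, Nat.mul_div_cancel' hpdvd]
  have hmpos : 0 < m := by
    rcases Nat.eq_zero_or_pos m with h | h
    · rw [h, mul_zero] at hnm; omega
    · exact h
  have hnpos : 0 < n := by omega
  have hζp : IsPrimitiveRoot (ζ ^ p) m := hζ.pow hnpos hnm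
  have hcard' : f.support.card < p := by rw [hpdef]; rcases hcard with h | h; omega; exact h
  have hx0 : ζ ^ p ∈ ℚ⟮ζ ^ p⟯ := IntermediateField.mem_adjoin_simple_self ℚ (ζ ^ p)
  set c : ℕ → ℚ⟮ζ ^ p⟯ := fun r => ∑ k ∈ f.support.filter (fun k => k % p = r),
      algebraMap ℚ ℚ⟮ζ ^ p⟯ (f.coeff k) * (⟨ζ ^ p, hx0⟩ : ℚ⟮ζ ^ p⟯) ^ (k / p) with hcdef
  have hcoe : ∀ r, ((c r : ℂ)) = ∑ k ∈ f.support.filter (fun k => k % p = r),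
      ((f.coeff k : ℂ) * (ζ ^ p) ^ (k / p)) := by
    intro r
    show algebraMap ℚ⟮ζ ^ p⟯ ℂ (c r) = _
    rw [hcdef, map_sum]
    refine Finset.sum_congr rfl fun k _ => ?_
    rw [map_mul, map_pow, ← IsScalarTower.algebraMap_apply ℚ ℚ⟮ζ ^ p⟯ ℂ,
      eq_ratCast (algebraMap ℚ ℂ)]
    rfl
  have hrel : ∑ r ∈ Finset.range p, ((c r : ℂ) * ζ ^ r) = 0 := by
    have step1 : ∑ r ∈ Finset.range p, ((c r : ℂ) * ζ ^ r)
        = ∑ r ∈ Finset.range p, ∑ k ∈ f.support.filter (fun k => k % p = r),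
            ((f.coeff k : ℂ) * ζ ^ k) := by
      refine Finset.sum_congr rfl fun r _ => ?_
      rw [hcoe, Finset.sum_mul]
      refine Finset.sum_congr rfl fun k hk => ?_
      have hkr : k % p = r := (Finset.mem_filter.mp hk).2
      rw [mul_assoc, ← pow_mul, ← pow_add]
      congr 2
      rw [← hkr]
      exact Nat.div_add_mod k p
    have step2 : ∑ r ∈ Finset.range p, ∑ k ∈ f.support.filter (fun k => k % p = r),
        ((f.coeff k : ℂ) * ζ ^ k) = ∑ k ∈ f.support, ((f.coeff k : ℂ) * ζ ^ k) :=
      Finset.sum_fiberwise_of_maps_to (fun k _ => Finset.mem_range.mpr (Nat.mod_lt _ hp.pos)) _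
    have step3 : ∑ k ∈ f.support, ((f.coeff k : ℂ) * ζ ^ k) = Polynomial.aeval ζ f := by
      rw [Polynomial.aeval_def, Polynomial.eval₂_eq_sum, Polynomial.sum_def]
      refine Finset.sum_congr rfl fun k _ => ?_
      rw [eq_ratCast (algebraMap ℚ ℂ)]
    rw [step1, step2, step3, heval]
  have hcount : ((Finset.range p).filter (fun r => c r ≠ 0)).card < p := by
    have hsub : (Finset.range p).filter (fun r => c r ≠ 0) ⊆ f.support.image (· % p) := by
      intro r hr
      have hcr : c r ≠ 0 := (Finset.mem_filter.mp hr).2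
      have hne : (f.support.filter (fun k => k % p = r)).Nonempty := by
        by_contra hemp
        rw [Finset.not_nonempty_iff_eq_empty] at hemp
        apply hcr
        rw [hcdef]
        simp only [hemp, Finset.sum_empty]
      obtain ⟨k, hk⟩ := hne
      have := Finset.mem_filter.mp hk
      exact Finset.mem_image.mpr ⟨k, this.1, this.2⟩
    calc ((Finset.range p).filter (fun r => c r ≠ 0)).card
        ≤ (f.support.image (· % p)).card := Finset.card_le_card hsub
      _ ≤ f.support.card := Finset.card_image_le
      _ < p := hcard'
  have hc0 := crux hn2 hpdef hζ c hrel hcount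
  apply Polynomial.support_eq_empty.mp
  apply Finset.eq_empty_of_forall_notMem
  intro k hk
  apply Polynomial.mem_support_iff.mp hk
  -- define the r-th slice polynomial
  set fr : Polynomial ℚ := ∑ k' ∈ f.support.filter (fun k' => k' % p = k % p),
      Polynomial.C (f.coeff k') * X ^ (k' / p) with hfrdef
  have hfrsupp : fr.support ⊆ (f.support.filter (fun k' => k' % p = k % p)).image (· / p) := by
    intro j hj
    by_contra hnot
    apply Polynomial.mem_support_iff.mp hj
    rw [hfrdef, Polynomial.finset_sum_coeff]
    apply Finset.sum_eq_zero
    intro k' hk'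
    have hne : k' / p ≠ j := fun h => hnot (Finset.mem_image.mpr ⟨k', hk', h⟩)
    rw [Polynomial.coeff_C_mul, Polynomial.coeff_X_pow, if_neg (Ne.symm hne), mul_zero]
  have hfreval : Polynomial.aeval (ζ ^ p) fr = 0 := by
    have h1 : Polynomial.aeval (ζ ^ p) fr = ((c (k % p) : ℂ)) := by
      rw [hfrdef, map_sum, hcoe]
      refine Finset.sum_congr rfl fun k' _ => ?_
      rw [map_mul, Polynomial.aeval_C, map_pow, Polynomial.aeval_X,
        eq_ratCast (algebraMap ℚ ℂ)]
    rw [h1, hc0 (k % p) (Nat.mod_lt _ hp.pos)]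
    rfl
  have hfr0 : fr = 0 := by
    apply ih m (by rw [hmdef]; exact Nat.div_lt_self hnpos hp.one_lt) (ζ ^ p) hζp fr
    · intro j hj
      obtain ⟨k', hk', rfl⟩ := Finset.mem_image.mp (hfrsupp hj)
      have hk'n : k' < n := hsupp k' (Finset.mem_filter.mp hk').1
      rw [Nat.div_lt_iff_lt_mul hp.pos, mul_comm m p, ← hnm]
      exact hk'n
    · exact hfreval
    · by_cases hm1 : m ≤ 1
      · exact Or.inl hm1
      · right
        have hmfac : n.minFac ≤ m.minFac := by
          apply Nat.minFac_le_of_dvd (Nat.minFac_prime (by omega : m ≠ 1)).two_le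
          exact dvd_trans (Nat.minFac_dvd m) ⟨p, by rw [hnm, mul_comm]⟩
        calc fr.support.card
            ≤ ((f.support.filter (fun k' => k' % p = k % p)).image (· / p)).card :=
              Finset.card_le_card hfrsupp
          _ ≤ (f.support.filter (fun k' => k' % p = k % p)).card := Finset.card_image_le
          _ ≤ f.support.card := Finset.card_le_card (Finset.filter_subset _ _)
          _ < p := hcard'
          _ ≤ m.minFac := by rw [hpdef]; exact hmfac
  -- extract the coefficient
  have hco : fr.coeff (k / p) = f.coeff k := by
    have hmem : k ∈ f.support.filter (fun k' => k' % p = k % p) :=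
      Finset.mem_filter.mpr ⟨hk, rfl⟩
    rw [hfrdef, Polynomial.finset_sum_coeff, Finset.sum_eq_single_of_mem k hmem]
    · rw [Polynomial.coeff_C_mul, Polynomial.coeff_X_pow, if_pos rfl, mul_one]
    · intro k' hk' hne
      have hmod : k' % p = k % p := (Finset.mem_filter.mp hk').2
      have hdivne : k' / p ≠ k / p := by
        intro hdiv
        apply hne
        have h1 := Nat.div_add_mod k' p
        have h2 := Nat.div_add_mod k p
        rw [hdiv, hmod] at h1
        exact h1.symm.trans h2
      rw [Polynomial.coeff_C_mul, Polynomial.coeff_X_pow, if_neg (Ne.symm hdivne), mul_zero]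
  rw [hfr0] at hco
  simpa using hco.symm

theorem stmt_6 (n : ℕ) (hn : 2 ≤ n) (E : Finset ℂ)
    (hroots : ∀ z ∈ E, z ^ n = 1) (hcard : E.card < n.minFac) :
    Indep ↑E := by
  intro s ε hsub hsum z hz
  classical
  have hn0 : n ≠ 0 := by omega
  haveI : NeZero n := ⟨hn0⟩
  have hζ : IsPrimitiveRoot (Complex.exp (2 * Real.pi * Complex.I / n)) n :=
    Complex.isPrimitiveRoot_exp n hn0
  set ζ := Complex.exp (2 * Real.pi * Complex.I / n) with hζdef
  have hsubF : s ⊆ E := fun x hx => by exact_mod_cast hsub (Finset.mem_coe.mpr hx)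
  have hex : ∀ w : ℂ, w ∈ s → ∃ j, j < n ∧ ζ ^ j = w := by
    intro w hw
    obtain ⟨j, hj, hjw⟩ := hζ.eq_pow_of_pow_eq_one (hroots w (hsubF hw))
    exact ⟨j, hj, hjw⟩
  set key : ℂ → ℕ := fun w => if h : ∃ j, j < n ∧ ζ ^ j = w then h.choose else 0 with hkeydef
  have hkey : ∀ w ∈ s, key w < n ∧ ζ ^ key w = w := by
    intro w hw
    have h := hex w hw
    rw [hkeydef]
    simp only [dif_pos h]
    exact ⟨h.choose_spec.1, h.choose_spec.2⟩
  set f : Polynomial ℚ := ∑ w ∈ s, Polynomial.C ((ε w : ℚ)) * X ^ (key w) with hfdef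
  have hsupim : f.support ⊆ s.image key := by
    intro j hj
    by_contra hnot
    apply Polynomial.mem_support_iff.mp hj
    rw [hfdef, Polynomial.finset_sum_coeff]
    apply Finset.sum_eq_zero
    intro w hw
    have hne : key w ≠ j := fun h => hnot (Finset.mem_image.mpr ⟨w, hw, h⟩)
    rw [Polynomial.coeff_C_mul, Polynomial.coeff_X_pow, if_neg (Ne.symm hne), mul_zero]
  have hfsupp : ∀ j ∈ f.support, j < n := by
    intro j hj
    obtain ⟨w, hw, rfl⟩ := Finset.mem_image.mp (hsupim hj)
    exact (hkey w hw).1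
  have hfeval : Polynomial.aeval ζ f = 0 := by
    rw [hfdef, map_sum, ← hsum]
    refine Finset.sum_congr rfl fun w hw => ?_
    rw [map_mul, Polynomial.aeval_C, map_pow, Polynomial.aeval_X, (hkey w hw).2,
      eq_ratCast (algebraMap ℚ ℂ)]
    push_cast
    rfl
  have hfcard : f.support.card < n.minFac := by
    calc f.support.card ≤ (s.image key).card := Finset.card_le_card hsupim
      _ ≤ s.card := Finset.card_image_le
      _ ≤ E.card := Finset.card_le_card hsubF
      _ < n.minFac := hcard
  have hf0 : f = 0 := keyPoly n ζ hζ f hfsupp hfeval (Or.inr hfcard)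
  have hkeyinj : ∀ w ∈ s, key w = key z → w = z := by
    intro w hw h
    rw [← (hkey w hw).2, ← (hkey z hz).2, h]
  have hco : f.coeff (key z) = ((ε z : ℚ)) := by
    rw [hfdef, Polynomial.finset_sum_coeff, Finset.sum_eq_single_of_mem z hz]
    · rw [Polynomial.coeff_C_mul, Polynomial.coeff_X_pow, if_pos rfl, mul_one]
    · intro w hw hne
      have hkne : key w ≠ key z := fun h => hne (hkeyinj w hw h)
      rw [Polynomial.coeff_C_mul, Polynomial.coeff_X_pow, if_neg (Ne.symm hkne), mul_zero]
  rw [hf0] at hco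
  have hz0 : ((ε z : ℚ)) = 0 := by simpa using hco.symm
  exact_mod_cast hz0
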